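/- Let ι be an index type and, for each i ∈ ι, let E_i be a real normed space, S_i ⊆ E_i a nonempty convex set, and b_i : E_i → ℝ a function that is strongly convex on S_i with parameter μ_i > 0. Assume μ := inf_i μ_i > 0. Let X := ℓ²(ι; E) be the space of families x = (x_i)_{i∈ι} with x_i ∈ E_i and Σ_i ‖x_i‖² < ∞, with norm ‖x‖ := (Σ_i ‖x_i‖²)^{1/2}. Suppose that for every x ∈ X with x_i ∈ S_i for all i, the family (b_i(x_i))_{i∈ι} is summable, and define b : X → ℝ on such points by b(x) := Σ_i b_i(x_i). Then b is strongly convex with parameter μ on the set S := {x ∈ X : x_i ∈ S_i for all i}: for all x, y ∈ S and λ ∈ (0,1), b(λx + (1−λ)y) + (1/2)μ λ(1−λ)‖x − y‖² ≤ λ b(x) + (1−λ) b(y). -/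

import Mathlib

open scoped ENNReal

/-- Strong convexity of an ℓ²-direct sum of strongly convex functions:
if each `b_i` is strongly convex on `S_i ⊆ E_i` with parameter `μ_i > 0` and
`μ := inf_i μ_i > 0`, and `b(x) := Σ_i b_i(x_i)` is well defined (the family is summable)
on `S := {x ∈ ℓ²(ι;E) : x_i ∈ S_i ∀i}`, then `b` is strongly convex on `S` with
parameter `μ`. -/
theorem strong_convexity_of_lp_sum
    {ι : Type*} {E : ι → Type*} [∀ i, NormedAddCommGroup (E i)]
    [∀ i, NormedSpace ℝ (E i)]
    (S : ∀ i, Set (E i)) (hSne : ∀ i, (S i).Nonempty) (hSconv : ∀ i, Convex ℝ (S i))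
    (bf : ∀ i, E i → ℝ) (μi : ι → ℝ) (hμi : ∀ i, 0 < μi i)
    (hsc : ∀ i, ∀ x ∈ S i, ∀ y ∈ S i, ∀ l ∈ Set.Ioo (0:ℝ) 1,
      bf i (l • x + (1 - l) • y) + (1 / 2) * μi i * l * (1 - l) * ‖x - y‖ ^ 2
        ≤ l * bf i x + (1 - l) * bf i y)
    (μ : ℝ) (hμdef : μ = ⨅ i, μi i) (hμpos : 0 < μ)
    (hsummable : ∀ x : lp E 2, (∀ i, x i ∈ S i) → Summable fun i => bf i (x i))
    (b : lp E 2 → ℝ)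
    (hb : ∀ x : lp E 2, (∀ i, x i ∈ S i) → b x = ∑' i, bf i (x i)) :
    ∀ x : lp E 2, (∀ i, x i ∈ S i) → ∀ y : lp E 2, (∀ i, y i ∈ S i) →
      ∀ l ∈ Set.Ioo (0:ℝ) 1,
        b (l • x + (1 - l) • y) + (1 / 2) * μ * l * (1 - l) * ‖x - y‖ ^ 2
          ≤ l * b x + (1 - l) * b y := by
  intro x hx y hy l hl
  obtain ⟨hl0, hl1⟩ := hl
  have hl1' : 0 < 1 - l := by linarith
  set z : lp E 2 := l • x + (1 - l) • y with hz
  have hzi : ∀ i, z i = l • x i + (1 - l) • y i := by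
    intro i; simp [hz]; rfl
  have hzS : ∀ i, z i ∈ S i := by
    intro i
    rw [hzi i]
    exact hSconv i (hx i) (hy i) hl0.le hl1'.le (by ring)
  -- μ ≤ μi i
  have hbdd : BddBelow (Set.range μi) := by
    refine ⟨0, ?_⟩
    rintro a ⟨i, rfl⟩
    exact (hμi i).le
  have hμle : ∀ i, μ ≤ μi i := by
    intro i
    rw [hμdef]
    exact ciInf_le hbdd i
  -- norm squared as tsum
  have hp2 : (0:ℝ) < (2 : ℝ≥0∞).toReal := by norm_num
  have hnorm : ‖x - y‖ ^ 2 = ∑' i, ‖x i - y i‖ ^ 2 := by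
    have := lp.norm_rpow_eq_tsum hp2 (x - y)
    have h2 : (2 : ℝ≥0∞).toReal = 2 := by norm_num
    rw [h2] at this
    have hx2 : ‖x - y‖ ^ (2:ℝ) = ‖x - y‖ ^ (2:ℕ) := by
      rw [← Real.rpow_natCast]; norm_num
    rw [hx2] at this
    rw [this]
    congr 1
    funext i
    have : (x - y : lp E 2) i = x i - y i := by simp
    rw [this, ← Real.rpow_natCast]; norm_num
  -- summability facts
  have hsumd : Summable fun i => ‖x i - y i‖ ^ 2 := by
    have := lp.memℓp (x - y)
    rw [memℓp_gen_iff hp2] at this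
    have h2 : (2 : ℝ≥0∞).toReal = 2 := by norm_num
    rw [h2] at this
    convert this using 2 with i
    have hc : (x - y : lp E 2) i = x i - y i := by simp
    rw [hc, ← Real.rpow_natCast]; norm_num
  have hsx := hsummable x hx
  have hsy := hsummable y hy
  have hsz := hsummable z hzS
  have hsL : Summable fun i =>
      bf i (z i) + (1 / 2) * μ * l * (1 - l) * ‖x i - y i‖ ^ 2 :=
    hsz.add (hsumd.mul_left _)
  have hsR : Summable fun i => l * bf i (x i) + (1 - l) * bf i (y i) :=
    (hsx.mul_left l).add (hsy.mul_left (1 - l))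
  -- pointwise inequality
  have hpt : ∀ i,
      bf i (z i) + (1 / 2) * μ * l * (1 - l) * ‖x i - y i‖ ^ 2
        ≤ l * bf i (x i) + (1 - l) * bf i (y i) := by
    intro i
    have h1 := hsc i (x i) (hx i) (y i) (hy i) l ⟨hl0, hl1⟩
    rw [← hzi i] at h1
    have h2 : (1 / 2) * μ * l * (1 - l) * ‖x i - y i‖ ^ 2
        ≤ (1 / 2) * μi i * l * (1 - l) * ‖x i - y i‖ ^ 2 := by
      have hsq : (0:ℝ) ≤ ‖x i - y i‖ ^ 2 := sq_nonneg _
      have := hμle i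
      gcongr
    linarith
  -- sum it up
  have hsum := Summable.tsum_le_tsum hpt hsL hsR
  rw [Summable.tsum_add hsz (hsumd.mul_left _), Summable.tsum_add (hsx.mul_left l) (hsy.mul_left (1 - l)),
    tsum_mul_left, tsum_mul_left, tsum_mul_left] at hsum
  rw [hb z hzS, hb x hx, hb y hy, hnorm]
  exact hsum
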